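/- For every real α with 1 < α < 2 there exist constants 0 < κ₁ ≤ κ₂ < ∞ such that for all sufficiently large integers n one has κ₁ · n ≤ (c_n^{(α)})^{1/n} ≤ κ₂ · n. -/

import Mathlib

open scoped Real BigOperators
open MeasureTheory Filter Asymptotics

/-- `B_{n,1} = (2-α)_{n-1} / ((n+1)(n+2))`, where `(x)_m` is the rising factorial. -/
noncomputable def B1 (α : ℝ) (n : ℕ) : ℝ :=
  (ascPochhammer ℝ (n - 1)).eval (2 - α) / ((n + 1 : ℝ) * (n + 2 : ℝ))

lemma poch_nonneg {α : ℝ} (hα₂ : α < 2) (m : ℕ) :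
    0 ≤ (ascPochhammer ℝ m).eval (2 - α) := by
  induction m with
  | zero => simp
  | succ m ih =>
      rw [ascPochhammer_succ_eval]
      have h1 : (0:ℝ) ≤ 2 - α + m := by
        have : (0:ℝ) ≤ (m:ℝ) := Nat.cast_nonneg m
        linarith
      exact mul_nonneg ih h1

lemma poch_le {α : ℝ} (hα₁ : 1 < α) (hα₂ : α < 2) (m : ℕ) :
    (ascPochhammer ℝ m).eval (2 - α) ≤ m.factorial := by
  induction m with
  | zero => simp
  | succ m ih =>
      rw [ascPochhammer_succ_eval]
      have h1 : 2 - α + m ≤ m + 1 := by linarith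
      have h2 : (0:ℝ) ≤ 2 - α + m := by
        have : (0:ℝ) ≤ (m:ℝ) := Nat.cast_nonneg m
        linarith
      calc (ascPochhammer ℝ m).eval (2 - α) * (2 - α + m)
          ≤ (m.factorial : ℝ) * (m + 1) :=
            mul_le_mul ih h1 h2 (Nat.cast_nonneg _)
        _ = ((m+1).factorial : ℝ) := by
            rw [Nat.factorial_succ]; push_cast; ring

lemma poch_ge {α : ℝ} (hα₂ : α < 2) (m : ℕ) :
    (2 - α) * m.factorial ≤ (ascPochhammer ℝ (m + 1)).eval (2 - α) := by
  induction m with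
  | zero => simp [ascPochhammer_one]
  | succ m ih =>
      rw [ascPochhammer_succ_eval]
      have h1 : ((m:ℝ) + 1) ≤ 2 - α + (m + 1) := by linarith
      have h2 : (0:ℝ) ≤ (2 - α) * m.factorial := by
        have : (0:ℝ) ≤ (m.factorial :ℝ) := Nat.cast_nonneg _
        nlinarith
      calc (2 - α) * ((m+1).factorial : ℝ)
          = ((2 - α) * m.factorial) * ((m:ℝ) + 1) := by
            rw [Nat.factorial_succ]; push_cast; ring
        _ ≤ (ascPochhammer ℝ (m+1)).eval (2 - α) * (2 - α + ((m:ℕ) + 1 : ℕ)) := by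
            push_cast
            exact mul_le_mul ih (by linarith) (by positivity) (poch_nonneg hα₂ _)

lemma B1_nonneg {α : ℝ} (hα₂ : α < 2) (n : ℕ) : 0 ≤ B1 α n := by
  unfold B1
  have := poch_nonneg hα₂ (n-1)
  positivity

lemma B1_le {α : ℝ} (hα₁ : 1 < α) (hα₂ : α < 2) (n : ℕ) :
    B1 α n ≤ n.factorial := by
  unfold B1
  have h1 : (ascPochhammer ℝ (n-1)).eval (2 - α) ≤ (n-1).factorial :=
    poch_le hα₁ hα₂ _
  have h0 := poch_nonneg hα₂ (n-1)
  have hd : (1:ℝ) ≤ ((n:ℝ) + 1) * ((n:ℝ) + 2) := by nlinarith [Nat.cast_nonneg (α := ℝ) n]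
  calc (ascPochhammer ℝ (n-1)).eval (2 - α) / (((n:ℝ) + 1) * ((n:ℝ) + 2))
      ≤ (ascPochhammer ℝ (n-1)).eval (2 - α) := div_le_self h0 hd
    _ ≤ ((n-1).factorial : ℝ) := h1
    _ ≤ (n.factorial : ℝ) := by
        exact_mod_cast Nat.factorial_le (Nat.sub_le n 1)

lemma B1_le' {α : ℝ} (hα₁ : 1 < α) (hα₂ : α < 2) (m : ℕ) :
    B1 α (m + 1) ≤ (m.factorial : ℝ) / (((m:ℝ) + 2) * ((m:ℝ) + 3)) := by
  unfold B1
  have h1 : (ascPochhammer ℝ m).eval (2 - α) ≤ m.factorial := poch_le hα₁ hα₂ m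
  have hd : (0:ℝ) < (((m:ℕ)+1:ℕ):ℝ) + 1 := by positivity
  have key : ((m+1:ℕ):ℝ) + 1 = (m:ℝ) + 2 := by push_cast; ring
  have key2 : ((m+1:ℕ):ℝ) + 2 = (m:ℝ) + 3 := by push_cast; ring
  simp only [Nat.add_sub_cancel, key, key2]
  have hd2 : (0:ℝ) < ((m:ℝ) + 2) * ((m:ℝ) + 3) := by positivity
  exact div_le_div_of_nonneg_right h1 hd2.le


noncomputable def gg (m : ℕ) : ℝ := 1 / ((m:ℝ) * ((m:ℝ) + 1) * ((m:ℝ) + 2))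

lemma gg_nonneg (m : ℕ) : 0 ≤ gg m := by unfold gg; positivity

lemma sum_gg_Icc (N : ℕ) :
    ∑ m ∈ Finset.Icc 1 N, gg m = 1/4 - 1/(2 * ((N:ℝ)+1) * ((N:ℝ)+2)) := by
  induction N with
  | zero => norm_num
  | succ N ih =>
      rw [Finset.sum_Icc_succ_top (by omega : 1 ≤ N + 1), ih]
      unfold gg
      have h1 : (0:ℝ) < (N:ℝ) + 1 := by positivity
      have h2 : (0:ℝ) < (N:ℝ) + 2 := by positivity
      have h3 : (0:ℝ) < (N:ℝ) + 3 := by positivity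
      push_cast
      field_simp
      ring

lemma sum_gg_le (s : Finset ℕ) (hs : ∀ m ∈ s, 1 ≤ m) :
    ∑ m ∈ s, gg m ≤ 1/4 := by
  have hsub : s ⊆ Finset.Icc 1 (s.sup id) := by
    intro m hm
    exact Finset.mem_Icc.2 ⟨hs m hm, Finset.le_sup (f := id) hm⟩
  calc ∑ m ∈ s, gg m ≤ ∑ m ∈ Finset.Icc 1 (s.sup id), gg m :=
        Finset.sum_le_sum_of_subset_of_nonneg hsub (fun m _ _ => gg_nonneg m)
    _ = 1/4 - 1/(2 * (((s.sup id : ℕ) : ℝ)+1) * (((s.sup id : ℕ) : ℝ)+2)) := sum_gg_Icc _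
    _ ≤ 1/4 := by
        have : (0:ℝ) ≤ 1/(2 * (((s.sup id : ℕ) : ℝ)+1) * (((s.sup id : ℕ) : ℝ)+2)) := by positivity
        linarith

/-- The coefficients `B_{n,k}`: `B_{n,1}` as above and
`B_{n,k+1} = (1/(k+1)) Σ_{l=k}^{n-1} C(n,l) B_{n-l,1} B_{l,k}` for `k ≥ 1`. -/
noncomputable def Bc (α : ℝ) : ℕ → ℕ → ℝ
  | _, 0 => 0
  | n, 1 => B1 α n
  | n, (k + 2) =>
      (1 / (k + 2 : ℝ)) *
        ∑ l ∈ Finset.Icc (k + 1) (n - 1),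
          (n.choose l : ℝ) * B1 α (n - l) * Bc α l (k + 1)

lemma Bc_nonneg {α : ℝ} (hα₂ : α < 2) : ∀ k n, 0 ≤ Bc α n k
  | 0, n => le_of_eq (by simp [Bc])
  | 1, n => by simpa [Bc] using B1_nonneg hα₂ n
  | (k+2), n => by
      rw [show Bc α n (k+2) = (1 / (k + 2 : ℝ)) *
        ∑ l ∈ Finset.Icc (k + 1) (n - 1),
          (n.choose l : ℝ) * B1 α (n - l) * Bc α l (k + 1) from rfl]
      apply mul_nonneg (by positivity)
      apply Finset.sum_nonneg
      intro l _
      exact mul_nonneg (mul_nonneg (Nat.cast_nonneg _) (B1_nonneg hα₂ _))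
        (Bc_nonneg hα₂ (k+1) l)

lemma Bc_le {α : ℝ} (hα₁ : 1 < α) (hα₂ : α < 2) :
    ∀ k n, Bc α n (k + 1) ≤ (n.factorial : ℝ) * (1/4)^k / ((k+1).factorial : ℝ)
  | 0, n => by
      simpa [Bc] using B1_le hα₁ hα₂ n
  | (k+1), n => by
      rw [show Bc α n (k+2) = (1 / (k + 2 : ℝ)) *
        ∑ l ∈ Finset.Icc (k + 1) (n - 1),
          (n.choose l : ℝ) * B1 α (n - l) * Bc α l (k + 1) from rfl]
      have key : ∀ l ∈ Finset.Icc (k + 1) (n - 1),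
          (n.choose l : ℝ) * B1 α (n - l) * Bc α l (k + 1) ≤
            ((n.factorial : ℝ) * (1/4)^k / ((k+1).factorial : ℝ)) * gg (n - l) := by
        intro l hl
        rw [Finset.mem_Icc] at hl
        have hln : l ≤ n := by omega
        have hj : 1 ≤ n - l := by omega
        obtain ⟨m, hm⟩ : ∃ m, n - l = m + 1 := ⟨n - l - 1, by omega⟩
        have hchoose : (n.choose l : ℝ) = (n.factorial : ℝ) / ((l.factorial : ℝ) * ((n-l).factorial : ℝ)) := by
          rw [Nat.cast_choose ℝ hln]
        have hB1 : B1 α (n - l) ≤ (m.factorial : ℝ) / (((m:ℝ) + 2) * ((m:ℝ) + 3)) := by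
          rw [hm]; exact B1_le' hα₁ hα₂ m
        have hBc : Bc α l (k + 1) ≤ (l.factorial : ℝ) * (1/4)^k / ((k+1).factorial : ℝ) :=
          Bc_le hα₁ hα₂ k l
        have h1 : (0:ℝ) ≤ (n.choose l : ℝ) := Nat.cast_nonneg _
        have h2 := B1_nonneg hα₂ (n - l)
        have h3 := Bc_nonneg hα₂ (k+1) l
        calc (n.choose l : ℝ) * B1 α (n - l) * Bc α l (k + 1)
            ≤ (n.choose l : ℝ) * ((m.factorial : ℝ) / (((m:ℝ) + 2) * ((m:ℝ) + 3))) *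
              ((l.factorial : ℝ) * (1/4)^k / ((k+1).factorial : ℝ)) := by
              apply mul_le_mul (mul_le_mul le_rfl hB1 h2 h1) hBc h3
              positivity
          _ = ((n.factorial : ℝ) * (1/4)^k / ((k+1).factorial : ℝ)) * gg (n - l) := by
              rw [hchoose, hm]
              unfold gg
              have e1 : ((m+1:ℕ).factorial : ℝ) = ((m:ℝ)+1) * (m.factorial : ℝ) := by
                rw [Nat.factorial_succ]; push_cast; ring
              have e2 : (((m+1:ℕ)):ℝ) = (m:ℝ)+1 := by push_cast; ring
              rw [e1, e2]
              have p1 : (0:ℝ) < (l.factorial : ℝ) := by positivity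
              have p2 : (0:ℝ) < (m.factorial : ℝ) := by positivity
              have p3 : (0:ℝ) < ((k+1).factorial : ℝ) := by positivity
              have p4 : (0:ℝ) < (m:ℝ)+1 := by positivity
              have p5 : (0:ℝ) < (m:ℝ)+2 := by positivity
              have p6 : (0:ℝ) < (m:ℝ)+3 := by positivity
              field_simp
              ring
      have hsum : ∑ l ∈ Finset.Icc (k + 1) (n - 1),
          (n.choose l : ℝ) * B1 α (n - l) * Bc α l (k + 1) ≤
          ((n.factorial : ℝ) * (1/4)^k / ((k+1).factorial : ℝ)) * (1/4) := by
        calc ∑ l ∈ Finset.Icc (k + 1) (n - 1),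
            (n.choose l : ℝ) * B1 α (n - l) * Bc α l (k + 1)
            ≤ ∑ l ∈ Finset.Icc (k + 1) (n - 1),
              ((n.factorial : ℝ) * (1/4)^k / ((k+1).factorial : ℝ)) * gg (n - l) :=
              Finset.sum_le_sum key
          _ = ((n.factorial : ℝ) * (1/4)^k / ((k+1).factorial : ℝ)) *
              ∑ l ∈ Finset.Icc (k + 1) (n - 1), gg (n - l) := by
              rw [Finset.mul_sum]
          _ ≤ ((n.factorial : ℝ) * (1/4)^k / ((k+1).factorial : ℝ)) * (1/4) := by
              apply mul_le_mul_of_nonneg_left ?_ (by positivity)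
              have hinj : Set.InjOn (fun l => n - l) (Finset.Icc (k + 1) (n - 1)) := by
                intro x hx y hy hxy
                simp only [Finset.coe_Icc, Set.mem_Icc] at hx hy
                simp only at hxy
                omega
              rw [← Finset.sum_image (f := gg) (g := fun l => n - l)
                (by intro x hx y hy h; exact hinj (by simpa using hx) (by simpa using hy) h)]
              apply sum_gg_le
              intro m hm
              obtain ⟨l, hl, rfl⟩ := Finset.mem_image.1 hm
              rw [Finset.mem_Icc] at hl
              omega
      calc (1 / (k + 2 : ℝ)) * ∑ l ∈ Finset.Icc (k + 1) (n - 1),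
          (n.choose l : ℝ) * B1 α (n - l) * Bc α l (k + 1)
          ≤ (1 / (k + 2 : ℝ)) * (((n.factorial : ℝ) * (1/4)^k / ((k+1).factorial : ℝ)) * (1/4)) := by
            apply mul_le_mul_of_nonneg_left hsum (by positivity)
        _ = (n.factorial : ℝ) * (1/4)^(k+1) / ((k+2).factorial : ℝ) := by
            have e : ((k+2).factorial : ℝ) = ((k:ℝ)+2) * ((k+1).factorial : ℝ) := by
              rw [Nat.factorial_succ]; push_cast; ring
            rw [e, pow_succ]
            have p3 : (0:ℝ) < ((k+1).factorial : ℝ) := by positivity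
            have p4 : (0:ℝ) < (k:ℝ)+2 := by positivity
            field_simp

/-- The coefficients `c_p^{(α)}`. -/
noncomputable def cC (α : ℝ) : ℕ → ℝ
  | 0 => 1
  | p + 1 =>
      (1 / ((2 * (p + 1)).factorial * Real.sqrt Real.pi)) * (2 / α) ^ (p + 1) *
        ∑ k ∈ Finset.Icc 1 (2 * (p + 1)),
          Bc α (2 * (p + 1)) k * Real.Gamma ((p + 1 : ℝ) + k + 1 / 2) *
            (2 * (α - 1)) ^ k

lemma fac_ratio (k q : ℕ) : (q + k).factorial ≤ k.factorial * (q + k)^q := by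
  induction q with
  | zero => simp
  | succ q ih =>
      have e : q + 1 + k = (q + k) + 1 := by omega
      rw [e, Nat.factorial_succ]
      calc (q + k + 1) * (q + k).factorial
          ≤ (q + k + 1) * (k.factorial * (q + k)^q) := Nat.mul_le_mul_left _ ih
        _ ≤ (q + k + 1) * (k.factorial * (q + k + 1)^q) := by
            exact Nat.mul_le_mul_left _ (Nat.mul_le_mul_left _
              (Nat.pow_le_pow_left (by omega) q))
        _ = k.factorial * (q + k + 1)^(q+1) := by ring
  
lemma Gamma_mono {x y : ℝ} (hx : 2 ≤ x) (hxy : x ≤ y) :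
    Real.Gamma x ≤ Real.Gamma y :=
  Real.Gamma_strictMonoOn_Ici.monotoneOn hx (le_trans hx hxy) hxy

lemma fact_lower (q : ℕ) : ((q:ℝ))^q ≤ (q.factorial : ℝ) * Real.exp 1 ^ q := by
  have h1 : ((q:ℝ))^q / (q.factorial : ℝ) ≤ Real.exp q := by
    calc ((q:ℝ))^q / (q.factorial : ℝ)
        ≤ ∑ i ∈ Finset.range (q+1), (q:ℝ)^i / i.factorial :=
          Finset.single_le_sum (f := fun i => (q:ℝ)^i / (i.factorial : ℝ))
            (fun i _ => by positivity) (Finset.self_mem_range_succ q)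
      _ ≤ Real.exp q := Real.sum_le_exp_of_nonneg (Nat.cast_nonneg q) (q+1)
  have h2 : Real.exp (q:ℝ) = Real.exp 1 ^ q := by
    rw [← Real.exp_nat_mul]; norm_num
  have hf : (0:ℝ) < (q.factorial : ℝ) := by positivity
  rw [div_le_iff₀ hf] at h1
  calc ((q:ℝ))^q ≤ Real.exp (q:ℝ) * (q.factorial:ℝ) := h1
    _ = (q.factorial : ℝ) * Real.exp 1 ^ q := by rw [h2]; ring

lemma cC_ge {α : ℝ} (hα₁ : 1 < α) (hα₂ : α < 2) (p : ℕ) :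
    2*(α-1)*(2-α) / Real.sqrt Real.pi * (2/α)^(p+1) * ((p+1).factorial : ℝ)
      / (256 * ((p:ℝ)+1)^4) ≤ cC α (p+1) := by
  have hπ : (0:ℝ) < Real.sqrt Real.pi := Real.sqrt_pos.2 Real.pi_pos
  have hαpos : (0:ℝ) < α := by linarith
  have hmem : 1 ∈ Finset.Icc 1 (2 * (p + 1)) := by
    rw [Finset.mem_Icc]; omega
  set f : ℕ → ℝ := fun k =>
    Bc α (2 * (p + 1)) k * Real.Gamma ((p + 1 : ℝ) + k + 1 / 2) * (2 * (α - 1)) ^ k with hf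
  have hfnonneg : ∀ k ∈ Finset.Icc 1 (2 * (p + 1)), 0 ≤ f k := by
    intro k _
    apply mul_nonneg (mul_nonneg (Bc_nonneg hα₂ _ _) ?_)
      (pow_nonneg (by linarith) k)
    apply (Real.Gamma_pos_of_pos ?_).le
    positivity
  have hsum : f 1 ≤ ∑ k ∈ Finset.Icc 1 (2 * (p + 1)), f k :=
    Finset.single_le_sum hfnonneg hmem
  -- lower bound for f 1
  have hBc : (2-α) * ((2*p).factorial : ℝ) / (((2*(p+1):ℕ):ℝ) + 1) / (((2*(p+1):ℕ):ℝ) + 2)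
      ≤ Bc α (2*(p+1)) 1 := by
    show _ ≤ B1 α (2*(p+1))
    unfold B1
    have hidx : 2*(p+1) - 1 = 2*p + 1 := by omega
    rw [hidx]
    have := poch_ge (α := α) hα₂ (2*p)
    rw [div_div]
    apply div_le_div_of_nonneg_right this (by positivity) |>.trans_eq
    rfl
  have hΓ : ((p+1).factorial : ℝ) ≤ Real.Gamma ((p + 1 : ℝ) + (1:ℕ) + 1 / 2) := by
    have e1 : Real.Gamma (((p+1:ℕ):ℝ) + 1) = ((p+1).factorial : ℝ) :=
      Real.Gamma_nat_eq_factorial (p+1)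
    rw [← e1]
    apply Gamma_mono
    · push_cast; linarith [Nat.cast_nonneg (α := ℝ) p]
    · push_cast; linarith
  -- combine
  have hA : (0:ℝ) ≤ (1 / (((2 * (p + 1)).factorial:ℝ) * Real.sqrt Real.pi)) * (2 / α) ^ (p + 1) := by
    positivity
  have h2α : (0:ℝ) ≤ 2 - α := by linarith
  have hα1 : (0:ℝ) ≤ α - 1 := by linarith
  have hL1 : (0:ℝ) ≤ (2-α) * ((2*p).factorial : ℝ) / (((2*(p+1):ℕ):ℝ) + 1) / (((2*(p+1):ℕ):ℝ) + 2) := by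
    apply div_nonneg (div_nonneg (mul_nonneg h2α (by positivity)) (by positivity)) (by positivity)
  have hΓ0 : (0:ℝ) < Real.Gamma ((p + 1 : ℝ) + (1:ℕ) + 1 / 2) := by
    apply Real.Gamma_pos_of_pos; positivity
  have hf1 : (2-α) * ((2*p).factorial : ℝ) / (((2*(p+1):ℕ):ℝ) + 1) / (((2*(p+1):ℕ):ℝ) + 2)
      * ((p+1).factorial : ℝ) * (2*(α-1)) ≤ f 1 := by
    have h1 : (2-α) * ((2*p).factorial : ℝ) / (((2*(p+1):ℕ):ℝ) + 1) / (((2*(p+1):ℕ):ℝ) + 2)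
        * ((p+1).factorial : ℝ) ≤ Bc α (2*(p+1)) 1 * Real.Gamma ((p + 1 : ℝ) + (1:ℕ) + 1 / 2) :=
      mul_le_mul hBc hΓ (by positivity) (Bc_nonneg hα₂ _ _)
    calc (2-α) * ((2*p).factorial : ℝ) / (((2*(p+1):ℕ):ℝ) + 1) / (((2*(p+1):ℕ):ℝ) + 2)
        * ((p+1).factorial : ℝ) * (2*(α-1))
        ≤ Bc α (2*(p+1)) 1 * Real.Gamma ((p + 1 : ℝ) + (1:ℕ) + 1 / 2) * (2*(α-1)) :=
          mul_le_mul_of_nonneg_right h1 (by linarith)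
      _ = f 1 := by rw [hf]; simp [pow_one]
  have hfacs : ((2*(p+1)).factorial : ℝ)
      = (2*(p:ℝ)+2)*(2*(p:ℝ)+1)*((2*p).factorial : ℝ) := by
    have e : 2*(p+1) = (2*p+1)+1 := by omega
    rw [e, Nat.factorial_succ, Nat.factorial_succ]; push_cast; ring
  have hx : (0:ℝ) ≤ (p:ℝ) := Nat.cast_nonneg p
  calc 2*(α-1)*(2-α) / Real.sqrt Real.pi * (2/α)^(p+1) * ((p+1).factorial : ℝ)
        / (256 * ((p:ℝ)+1)^4)
      ≤ 2*(α-1)*(2-α) / Real.sqrt Real.pi * (2/α)^(p+1) * ((p+1).factorial : ℝ)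
        / ((2*(p:ℝ)+1) * (2*(p:ℝ)+2) * (2*(p:ℝ)+3) * (2*(p:ℝ)+4)) := by
        have hnum : (0:ℝ) ≤ 2*(α-1)*(2-α) / Real.sqrt Real.pi * (2/α)^(p+1) * ((p+1).factorial : ℝ) := by
          apply mul_nonneg (mul_nonneg (div_nonneg (by nlinarith) hπ.le) (by positivity)) (by positivity)
        have hden : (2*(p:ℝ)+1) * (2*(p:ℝ)+2) * (2*(p:ℝ)+3) * (2*(p:ℝ)+4) ≤ 256 * ((p:ℝ)+1)^4 := by
          nlinarith [pow_nonneg hx 4, pow_nonneg hx 3, pow_nonneg hx 2, hx]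
        gcongr
    _ = ((1 / (((2 * (p + 1)).factorial:ℝ) * Real.sqrt Real.pi)) * (2 / α) ^ (p + 1)) *
        ((2-α) * ((2*p).factorial : ℝ) / (((2*(p+1):ℕ):ℝ) + 1) / (((2*(p+1):ℕ):ℝ) + 2)
          * ((p+1).factorial : ℝ) * (2*(α-1))) := by
        rw [hfacs]
        have c1 : ((2*(p+1):ℕ):ℝ) = 2*(p:ℝ)+2 := by push_cast; ring
        rw [c1]
        have n1 : (0:ℝ) < (2*(p:ℝ)+1) := by linarith
        have n2 : (0:ℝ) < (2*(p:ℝ)+2) := by linarith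
        have n3 : (0:ℝ) < (2*(p:ℝ)+3) := by linarith
        have n4 : (0:ℝ) < (2*(p:ℝ)+4) := by linarith
        have n5 : (0:ℝ) < ((2*p).factorial : ℝ) := by positivity
        field_simp
        ring
    _ ≤ ((1 / (((2 * (p + 1)).factorial:ℝ) * Real.sqrt Real.pi)) * (2 / α) ^ (p + 1)) * f 1 :=
        mul_le_mul_of_nonneg_left hf1 hA
    _ ≤ ((1 / (((2 * (p + 1)).factorial:ℝ) * Real.sqrt Real.pi)) * (2 / α) ^ (p + 1)) *
        ∑ k ∈ Finset.Icc 1 (2 * (p + 1)), f k :=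
        mul_le_mul_of_nonneg_left hsum hA
    _ = cC α (p+1) := rfl

lemma cC_le {α : ℝ} (hα₁ : 1 < α) (hα₂ : α < 2) (p : ℕ) :
    cC α (p+1) ≤ (4*((p:ℝ)+1) / Real.sqrt Real.pi) * (2/α)^(p+1) * (3*((p:ℝ)+1))^(p+1) := by
  have hπ : (0:ℝ) < Real.sqrt Real.pi := Real.sqrt_pos.2 Real.pi_pos
  have hαpos : (0:ℝ) < α := by linarith
  set f : ℕ → ℝ := fun k =>
    Bc α (2 * (p + 1)) k * Real.Gamma ((p + 1 : ℝ) + k + 1 / 2) * (2 * (α - 1)) ^ k with hf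
  set B : ℝ := 2 * ((2*(p+1)).factorial : ℝ) * (3*((p:ℝ)+1))^(p+1) with hB
  have hterm : ∀ k ∈ Finset.Icc 1 (2 * (p + 1)), f k ≤ B := by
    intro k hk
    rw [Finset.mem_Icc] at hk
    obtain ⟨j, rfl⟩ : ∃ j, k = j + 1 := ⟨k - 1, by omega⟩
    have hBc : Bc α (2*(p+1)) (j+1) ≤ ((2*(p+1)).factorial : ℝ) * (1/4)^j / ((j+1).factorial : ℝ) :=
      Bc_le hα₁ hα₂ j (2*(p+1))
    have hΓ : Real.Gamma ((p + 1 : ℝ) + (j+1:ℕ) + 1 / 2) ≤ ((p+1+(j+1)).factorial : ℝ) := by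
      have e2 : Real.Gamma ((((p+1+(j+1):ℕ)):ℝ) + 1) = (((p+1+(j+1)).factorial : ℕ) : ℝ) := by
        exact_mod_cast Real.Gamma_nat_eq_factorial (p+1+(j+1))
      rw [← e2]
      apply Gamma_mono
      · push_cast; linarith [Nat.cast_nonneg (α := ℝ) p, Nat.cast_nonneg (α := ℝ) j]
      · push_cast; linarith
    have hpow : (2*(α-1))^(j+1) ≤ (2:ℝ)^(j+1) :=
      pow_le_pow_left₀ (by linarith) (by linarith) (j+1)
    have hfac : ((p+1+(j+1)).factorial : ℝ) ≤ ((j+1).factorial : ℝ) * (3*((p:ℝ)+1))^(p+1) := by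
      have h1 : (p+1+(j+1)).factorial ≤ (j+1).factorial * (p+1+(j+1))^(p+1) :=
        fac_ratio (j+1) (p+1)
      have h2 : ((p+1+(j+1)):ℝ) ≤ 3*((p:ℝ)+1) := by
        have : j + 1 ≤ 2*(p+1) := hk.2
        push_cast
        have : ((j:ℝ)+1) ≤ 2*((p:ℝ)+1) := by exact_mod_cast this
        linarith
      calc ((p+1+(j+1)).factorial : ℝ) ≤ ((j+1).factorial : ℝ) * ((p+1+(j+1):ℕ):ℝ)^(p+1) := by
            exact_mod_cast h1
        _ ≤ ((j+1).factorial : ℝ) * (3*((p:ℝ)+1))^(p+1) := by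
            apply mul_le_mul_of_nonneg_left (pow_le_pow_left₀ (by positivity) ?_ _) (by positivity)
            push_cast at h2 ⊢; linarith
    have hΓ0 : 0 ≤ Real.Gamma ((p + 1 : ℝ) + (j+1:ℕ) + 1 / 2) := by
      apply (Real.Gamma_pos_of_pos ?_).le; positivity
    have step : f (j+1) ≤ (((2*(p+1)).factorial : ℝ) * (1/4)^j / ((j+1).factorial : ℝ)) *
        (((j+1).factorial : ℝ) * (3*((p:ℝ)+1))^(p+1)) * (2:ℝ)^(j+1) := by
      rw [hf]
      apply mul_le_mul (mul_le_mul hBc (hΓ.trans hfac) hΓ0 (by positivity))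
        hpow (pow_nonneg (by linarith) _) (by positivity)
    calc f (j+1) ≤ _ := step
      _ = ((2*(p+1)).factorial : ℝ) * (3*((p:ℝ)+1))^(p+1) * ((1/4:ℝ)^j * 2^(j+1)) := by
          have hj : (0:ℝ) < ((j+1).factorial : ℝ) := by positivity
          field_simp
      _ ≤ B := by
          rw [hB]
          have h14 : (1/4:ℝ)^j * 2^(j+1) ≤ 2 := by
            have e : (1/4:ℝ)^j * 2^(j+1) = 2 * (1/2:ℝ)^j := by
              rw [pow_succ]
              rw [show (1/4:ℝ)^j * ((2:ℝ)^j * 2) = ((1/4:ℝ) * 2)^j * 2 by rw [mul_pow]; ring]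
              norm_num
              ring
            rw [e]
            have : (1/2:ℝ)^j ≤ 1 := pow_le_one₀ (by norm_num) (by norm_num)
            linarith
          calc ((2*(p+1)).factorial : ℝ) * (3*((p:ℝ)+1))^(p+1) * ((1/4:ℝ)^j * 2^(j+1))
              ≤ ((2*(p+1)).factorial : ℝ) * (3*((p:ℝ)+1))^(p+1) * 2 :=
                mul_le_mul_of_nonneg_left h14 (by positivity)
            _ = 2 * ((2*(p+1)).factorial : ℝ) * (3*((p:ℝ)+1))^(p+1) := by ring
  have hsum : ∑ k ∈ Finset.Icc 1 (2 * (p + 1)), f k ≤ (2*(p+1) : ℕ) • B := by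
    have := Finset.sum_le_card_nsmul (Finset.Icc 1 (2 * (p + 1))) f B hterm
    rwa [Nat.card_Icc, show 2*(p+1)+1-1 = 2*(p+1) from rfl] at this
  have hA : (0:ℝ) ≤ (1 / (((2 * (p + 1)).factorial:ℝ) * Real.sqrt Real.pi)) * (2 / α) ^ (p + 1) := by
    positivity
  calc cC α (p+1)
      = ((1 / (((2 * (p + 1)).factorial:ℝ) * Real.sqrt Real.pi)) * (2 / α) ^ (p + 1)) *
        ∑ k ∈ Finset.Icc 1 (2 * (p + 1)), f k := rfl
    _ ≤ ((1 / (((2 * (p + 1)).factorial:ℝ) * Real.sqrt Real.pi)) * (2 / α) ^ (p + 1)) *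
        ((2*(p+1) : ℕ) • B) := mul_le_mul_of_nonneg_left hsum hA
    _ = (4*((p:ℝ)+1) / Real.sqrt Real.pi) * (2/α)^(p+1) * (3*((p:ℝ)+1))^(p+1) := by
        rw [nsmul_eq_mul, hB]
        have hfac : (0:ℝ) < ((2*(p+1)).factorial : ℝ) := by positivity
        push_cast
        field_simp
        ring

/-- For `1 < α < 2` there exist constants `0 < κ₁ ≤ κ₂ < ∞` with
`κ₁ n ≤ (c_n^{(α)})^{1/n} ≤ κ₂ n` for all sufficiently large `n`. -/
theorem cC_root_growth (α : ℝ) (hα₁ : 1 < α) (hα₂ : α < 2) :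
    ∃ κ₁ κ₂ : ℝ, 0 < κ₁ ∧ κ₁ ≤ κ₂ ∧
      ∀ᶠ n : ℕ in atTop,
        κ₁ * n ≤ (cC α n) ^ (1 / (n : ℝ)) ∧ (cC α n) ^ (1 / (n : ℝ)) ≤ κ₂ * n := by
  have hαpos : (0:ℝ) < α := by linarith
  have hπ : (0:ℝ) < Real.sqrt Real.pi := Real.sqrt_pos.2 Real.pi_pos
  have he : (1:ℝ) < Real.exp 1 := by
    have := Real.exp_one_gt_d9; linarith
  set κ₁ : ℝ := 1 / (α * Real.exp 1) with hκ₁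
  set κ₂ : ℝ := 12 / α with hκ₂
  have hκ₁pos : 0 < κ₁ := by rw [hκ₁]; positivity
  have hκ₁₂ : κ₁ ≤ κ₂ := by
    rw [hκ₁, hκ₂]
    rw [div_le_div_iff₀ (by positivity) hαpos]
    nlinarith
  refine ⟨κ₁, κ₂, hκ₁pos, hκ₁₂, ?_⟩
  set D : ℝ := 2*(α-1)*(2-α) / Real.sqrt Real.pi with hD
  have hDpos : 0 < D := by
    rw [hD]
    apply div_pos (by nlinarith) hπ
  have h1 : ∀ᶠ n : ℕ in atTop, ((n:ℝ))^4 ≤ D/256 * 2^n := by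
    have ho := isLittleO_pow_const_const_pow_of_one_lt (R := ℝ) 4 (by norm_num : (1:ℝ) < 2)
    filter_upwards [ho.def (by positivity : (0:ℝ) < D/256)] with n hn
    have e1 : ‖((n:ℝ))^4‖ = ((n:ℝ))^4 := Real.norm_of_nonneg (by positivity)
    have e2 : ‖(2:ℝ)^n‖ = (2:ℝ)^n := Real.norm_of_nonneg (by positivity)
    rw [e1, e2] at hn
    exact hn
  have h2 : ∀ᶠ n : ℕ in atTop, 4*((n:ℝ)) ≤ Real.sqrt Real.pi * 2^n := by
    have ho := isLittleO_pow_const_const_pow_of_one_lt (R := ℝ) 1 (by norm_num : (1:ℝ) < 2)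
    filter_upwards [ho.def (by positivity : (0:ℝ) < Real.sqrt Real.pi / 4)] with n hn
    have e1 : ‖((n:ℝ))^1‖ = (n:ℝ) := by rw [pow_one]; exact Real.norm_of_nonneg (by positivity)
    have e2 : ‖(2:ℝ)^n‖ = (2:ℝ)^n := Real.norm_of_nonneg (by positivity)
    rw [e1, e2] at hn
    linarith
  filter_upwards [h1, h2, eventually_ge_atTop 1] with n hn1 hn2 hn3
  obtain ⟨p, rfl⟩ : ∃ p, n = p + 1 := ⟨n - 1, by omega⟩
  set Q : ℝ := (p:ℝ) + 1 with hQ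
  have hQ1 : (1:ℝ) ≤ Q := by rw [hQ]; linarith [Nat.cast_nonneg (α := ℝ) p]
  have hQpos : (0:ℝ) < Q := by linarith
  have hcast : ((p+1 : ℕ):ℝ) = Q := by rw [hQ]; push_cast; ring
  rw [hcast] at hn1 hn2 ⊢
  -- Lower bound: (κ₁ * Q)^(p+1) ≤ cC α (p+1)
  have hlow : (κ₁ * Q)^(p+1) ≤ cC α (p+1) := by
    have hfl : Q^(p+1) / Real.exp 1 ^ (p+1) ≤ (((p+1).factorial : ℕ):ℝ) := by
      rw [div_le_iff₀ (by positivity)]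
      have := fact_lower (p+1)
      rw [hcast] at this
      exact this
    have hc : 256 * Q^4 ≤ D * 2^(p+1) := by
      calc 256 * Q^4 ≤ 256 * (D/256 * 2^(p+1)) := by linarith [hn1]
        _ = D * 2^(p+1) := by ring
    have step1 : (κ₁ * Q)^(p+1) ≤ D * (2/α)^(p+1) * (Q^(p+1) / Real.exp 1 ^ (p+1))
        / (256 * Q^4) := by
      rw [le_div_iff₀ (by positivity : (0:ℝ) < 256 * Q^4)]
      have e1 : (κ₁ * Q)^(p+1) = (Q / (α * Real.exp 1))^(p+1) := by
        rw [hκ₁]; congr 1; ring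
      have e2 : D * (2/α)^(p+1) * (Q^(p+1) / Real.exp 1 ^ (p+1))
          = (Q / (α * Real.exp 1))^(p+1) * (D * 2^(p+1)) := by
        rw [div_pow Q (α*Real.exp 1), mul_pow α (Real.exp 1), div_pow (2:ℝ) α]
        field_simp
      rw [e1, e2]
      exact mul_le_mul_of_nonneg_left hc (by positivity)
    calc (κ₁ * Q)^(p+1)
        ≤ D * (2/α)^(p+1) * (Q^(p+1) / Real.exp 1 ^ (p+1)) / (256 * Q^4) := step1
      _ ≤ D * (2/α)^(p+1) * (((p+1).factorial : ℕ):ℝ) / (256 * Q^4) := by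
          gcongr
      _ = D * (2/α)^(p+1) * (((p+1).factorial : ℕ):ℝ) / (256 * ((p:ℝ)+1)^4) := by rw [hQ]
      _ ≤ cC α (p+1) := by
          have := cC_ge hα₁ hα₂ p
          rw [hD]
          exact this
  -- Upper bound
  have hupp : cC α (p+1) ≤ (κ₂ * Q)^(p+1) := by
    have h4Q : 4*Q / Real.sqrt Real.pi ≤ 2^(p+1) := by
      rw [div_le_iff₀ hπ]
      calc 4*Q ≤ Real.sqrt Real.pi * 2^(p+1) := hn2
        _ = 2^(p+1) * Real.sqrt Real.pi := by ring
    calc cC α (p+1)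
        ≤ (4*((p:ℝ)+1) / Real.sqrt Real.pi) * (2/α)^(p+1) * (3*((p:ℝ)+1))^(p+1) :=
          cC_le hα₁ hα₂ p
      _ = (4*Q / Real.sqrt Real.pi) * ((2/α) * (3*Q))^(p+1) := by
          rw [hQ, mul_pow (2/α) (3*((p:ℝ)+1))]; ring
      _ ≤ 2^(p+1) * ((2/α) * (3*Q))^(p+1) := by
          apply mul_le_mul_of_nonneg_right h4Q (by positivity)
      _ = (κ₂ * Q)^(p+1) := by
          have ebase : (2:ℝ) * ((2/α)*(3*Q)) = κ₂ * Q := by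
            rw [hκ₂]; field_simp; ring
          rw [← mul_pow, ebase]
  -- convert to rpow
  have hcCpos : 0 < cC α (p+1) := lt_of_lt_of_le (by positivity) hlow
  have hne : ((p+1:ℕ):ℝ) ≠ 0 := by rw [hcast]; positivity
  have root_eq : ∀ x : ℝ, 0 ≤ x → (x^(p+1)) ^ (1 / (((p+1:ℕ)):ℝ)) = x := by
    intro x hx
    rw [← Real.rpow_natCast x (p+1), ← Real.rpow_mul hx, mul_one_div, div_self hne,
      Real.rpow_one]
  constructor
  · have := Real.rpow_le_rpow (by positivity : (0:ℝ) ≤ (κ₁ * Q)^(p+1)) hlow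
      (by positivity : (0:ℝ) ≤ 1 / (((p+1:ℕ)):ℝ))
    rw [root_eq _ (by positivity)] at this
    rw [hcast] at this
    exact this
  · have := Real.rpow_le_rpow hcCpos.le hupp (by positivity : (0:ℝ) ≤ 1 / (((p+1:ℕ)):ℝ))
    rw [root_eq _ (by positivity)] at this
    rw [hcast] at this
    exact this
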